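/- Let T be an exponential random variable with rate λ > 0 and let r(t) = (log(e^{β−1} + t))^β for some β ≥ 1. Then E[r(T)] ≤ C(1 + (log(1 ∨ λ⁻¹))^β) for a constant C depending only on β. -/

import Mathlib

open MeasureTheory

open Real in

lemma two_rpow_aux {x y p : ℝ} (hx : 0 ≤ x) (hy : 0 ≤ y) (hp : 1 ≤ p) :
    (x + y) ^ p ≤ 2 ^ (p - 1) * (x ^ p + y ^ p) := by
  have h := NNReal.rpow_add_le_mul_rpow_add_rpow ⟨x, hx⟩ ⟨y, hy⟩ hp
  have h2 := NNReal.coe_le_coe.2 h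
  push_cast at h2
  exact h2

/-- If `T ~ Exp(λ)` and `r(t) = (log(e^{β−1} + t))^β` with `β ≥ 1`, then
`E[r(T)] ≤ C (1 + (log(1 ∨ λ⁻¹))^β)` for a constant `C` depending only on `β`. -/
theorem stmt_11 (β : ℝ) (hβ : 1 ≤ β) :
    ∃ C : ℝ, 0 < C ∧ ∀ lam : ℝ, 0 < lam →
      (∫ t in Set.Ioi (0:ℝ),
          (Real.log (Real.exp (β - 1) + t)) ^ β * (lam * Real.exp (-lam * t))) ≤
        C * (1 + (Real.log (max 1 lam⁻¹)) ^ β) := by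
  set a : ℝ := Real.exp (β - 1) with ha
  have ha1 : 1 ≤ a := by
    rw [ha]; calc (1:ℝ) = Real.exp 0 := (Real.exp_zero).symm
    _ ≤ _ := Real.exp_le_exp.2 (by linarith)
  have hloga : Real.log a = β - 1 := Real.log_exp _
  set c0 : ℝ := β - 1 + Real.log 2 with hc0
  have hc0pos : 0 < c0 := by
    have : (0:ℝ) < Real.log 2 := Real.log_pos (by norm_num)
    rw [hc0]; linarith
  have hΓ : 0 < Real.Gamma (β + 1) := Real.Gamma_pos_of_pos (by linarith)
  have h2p : (0:ℝ) < 2 ^ (β - 1) := Real.rpow_pos_of_pos (by norm_num) _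
  refine ⟨2 ^ (β - 1) * (2 ^ (β - 1) * (c0 ^ β + 1) + Real.Gamma (β + 1)), by positivity,
    fun lam hlam => ?_⟩
  set M : ℝ := Real.log (max 1 lam⁻¹) with hM
  have hMnn : 0 ≤ M := Real.log_nonneg (le_max_left _ _)
  set L : ℝ := Real.log (a + lam⁻¹) with hL
  have hlaminv : 0 < lam⁻¹ := inv_pos.2 hlam
  have haL : 0 < a + lam⁻¹ := by linarith
  have hLnn : 0 ≤ L := Real.log_nonneg (by linarith)
  -- L ≤ c0 + M
  have hLle : L ≤ c0 + M := by
    have hmax1 : (1:ℝ) ≤ max 1 lam⁻¹ := le_max_left _ _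
    have hmax2 : lam⁻¹ ≤ max 1 lam⁻¹ := le_max_right _ _
    have hstep : a + lam⁻¹ ≤ a * (2 * max 1 lam⁻¹) := by nlinarith
    calc L ≤ Real.log (a * (2 * max 1 lam⁻¹)) :=
          Real.log_le_log haL hstep
      _ = Real.log a + (Real.log 2 + M) := by
          rw [Real.log_mul (by linarith) (by positivity),
            Real.log_mul (by norm_num) (by positivity)]
      _ = c0 + M := by rw [hloga, hc0]; ring
  -- the dominating function
  set g : ℝ → ℝ := fun t =>
    2 ^ (β - 1) * lam * L ^ β * Real.exp (-lam * t)
      + 2 ^ (β - 1) * lam ^ (β + 1) * (t ^ β * Real.exp (-lam * t)) with hg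
  have hint1 : IntegrableOn (fun t : ℝ => Real.exp (-lam * t)) (Set.Ioi 0) := by
    simpa [neg_mul] using exp_neg_integrableOn_Ioi 0 hlam
  have hint2 : IntegrableOn (fun t : ℝ => t ^ β * Real.exp (-lam * t)) (Set.Ioi 0) := by
    have := integrableOn_rpow_mul_exp_neg_mul_rpow (p := 1) (s := β) (b := lam)
      (by linarith) one_pos hlam
    simpa [Real.rpow_one] using this
  have hgint : IntegrableOn g (Set.Ioi 0) :=
    ((hint1.const_mul _).add (hint2.const_mul _))
  -- pointwise bound on Ioi 0
  have hpt : ∀ t ∈ Set.Ioi (0:ℝ),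
      (Real.log (a + t)) ^ β * (lam * Real.exp (-lam * t)) ≤ g t := by
    intro t ht
    have ht0 : 0 < t := ht
    have hat : 0 < a + t := by linarith
    have hlog_nn : 0 ≤ Real.log (a + t) := Real.log_nonneg (by linarith)
    -- log (a+t) ≤ L + lam * t
    have hkey : Real.log (a + t) ≤ L + lam * t := by
      have hdiv : 0 < (a + t) / (a + lam⁻¹) := by positivity
      have h1 := Real.log_le_sub_one_of_pos hdiv
      rw [Real.log_div hat.ne' haL.ne'] at h1
      have h2 : (a + t) / (a + lam⁻¹) - 1 ≤ lam * t := by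
        rw [div_sub_one haL.ne', div_le_iff₀ haL]
        have hexpand : lam * t * (a + lam⁻¹) = lam * t * a + t := by
          field_simp
        have : 0 < lam * t * a := by positivity
        linarith
      linarith
    have h3 : (Real.log (a + t)) ^ β ≤ (L + lam * t) ^ β :=
      Real.rpow_le_rpow hlog_nn hkey (by linarith)
    have h4 : (L + lam * t) ^ β ≤ 2 ^ (β - 1) * (L ^ β + (lam * t) ^ β) :=
      two_rpow_aux hLnn (by positivity) hβ
    have hexp : 0 < lam * Real.exp (-lam * t) := by positivity
    calc (Real.log (a + t)) ^ β * (lam * Real.exp (-lam * t))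
        ≤ (2 ^ (β - 1) * (L ^ β + (lam * t) ^ β)) * (lam * Real.exp (-lam * t)) := by
          exact mul_le_mul_of_nonneg_right (h3.trans h4) hexp.le
      _ = g t := by
          rw [hg]
          have hml : (lam * t) ^ β = lam ^ β * t ^ β :=
            Real.mul_rpow hlam.le ht0.le
          have hl1 : lam ^ (β + 1) = lam ^ β * lam := by
            rw [Real.rpow_add hlam, Real.rpow_one]
          simp only [hml, hl1]
          ring
    -- end calc
  -- integral comparison
  have hmono : (∫ t in Set.Ioi (0:ℝ),
      (Real.log (a + t)) ^ β * (lam * Real.exp (-lam * t))) ≤ ∫ t in Set.Ioi (0:ℝ), g t := by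
    refine integral_mono_of_nonneg ?_ hgint ?_
    · filter_upwards [ae_restrict_mem measurableSet_Ioi] with t ht
      have ht0 : (0:ℝ) < t := ht
      have : 0 ≤ Real.log (a + t) := Real.log_nonneg (by linarith)
      positivity
    · filter_upwards [ae_restrict_mem measurableSet_Ioi] with t ht
      exact hpt t ht
  -- compute ∫ g
  have hI1 : (∫ x in Set.Ioi (0:ℝ), Real.exp (-lam * x)) = lam⁻¹ := by
    have := integral_rpow_mul_exp_neg_mul_rpow (one_pos) (by norm_num : (-1:ℝ) < 0) hlam
    simp [Real.rpow_one, Real.Gamma_one, Real.rpow_neg_one] at this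
    simpa using this
  have hI2 : (∫ x in Set.Ioi (0:ℝ), x ^ β * Real.exp (-lam * x))
      = lam ^ (-(β + 1)) * Real.Gamma (β + 1) := by
    have := integral_rpow_mul_exp_neg_mul_rpow (one_pos) (by linarith : (-1:ℝ) < β) hlam
    simpa [Real.rpow_one] using this
  have hgval : (∫ t in Set.Ioi (0:ℝ), g t)
      = 2 ^ (β - 1) * (L ^ β + Real.Gamma (β + 1)) := by
    rw [hg]
    rw [integral_add (hint1.const_mul _) (hint2.const_mul _),
      integral_const_mul, integral_const_mul, hI1, hI2]
    have hcancel : lam ^ (β + 1) * lam ^ (-(β + 1)) = 1 := by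
      rw [← Real.rpow_add hlam, add_neg_cancel, Real.rpow_zero]
    have e1 : lam * lam⁻¹ = 1 := mul_inv_cancel₀ hlam.ne'
    generalize hP : lam ^ (β + 1) = P at hcancel ⊢
    generalize hQ : lam ^ (-(β + 1)) = Q at hcancel ⊢
    generalize hD : (2:ℝ) ^ (β - 1) = D
    linear_combination D * L ^ β * e1 + D * Real.Gamma (β + 1) * hcancel
  -- final bound
  have hLpow : L ^ β ≤ 2 ^ (β - 1) * (c0 ^ β + M ^ β) := by
    calc L ^ β ≤ (c0 + M) ^ β := Real.rpow_le_rpow hLnn hLle (by linarith)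
      _ ≤ _ := two_rpow_aux hc0pos.le hMnn hβ
  have hMpow : 0 ≤ M ^ β := Real.rpow_nonneg hMnn _
  have hc0pow : 0 ≤ c0 ^ β := Real.rpow_nonneg hc0pos.le _
  calc (∫ t in Set.Ioi (0:ℝ), (Real.log (a + t)) ^ β * (lam * Real.exp (-lam * t)))
      ≤ ∫ t in Set.Ioi (0:ℝ), g t := hmono
    _ = 2 ^ (β - 1) * (L ^ β + Real.Gamma (β + 1)) := hgval
    _ ≤ 2 ^ (β - 1) * (2 ^ (β - 1) * (c0 ^ β + M ^ β) + Real.Gamma (β + 1)) := by nlinarith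
    _ ≤ 2 ^ (β - 1) * (2 ^ (β - 1) * (c0 ^ β + 1) + Real.Gamma (β + 1)) * (1 + M ^ β) := by
        nlinarith [mul_pos h2p h2p,
          mul_nonneg (mul_nonneg (mul_nonneg h2p.le h2p.le) hc0pow) hMpow,
          mul_nonneg (mul_nonneg h2p.le hΓ.le) hMpow]
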